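/- The spin representation of 𝔰𝔬(2m+1) on Δ = ⋀W is irreducible: if U ⊆ Δ is a ℂ-linear subspace satisfying X_v(X_w(U)) ⊆ U, X_v(D(U)) ⊆ U, X_v(D_λ(U)) ⊆ U, D(D_λ(U)) ⊆ U, and D_λ(D_μ(U)) ⊆ U for all v, w ∈ W and λ, μ ∈ W*, then U = 0 or U = Δ. -/

import Mathlib

noncomputable section

open TensorProduct

/-- `W = ℂ^m`. -/
abbrev SpinW (m : ℕ) : Type := Fin m → ℂ

/-- `Δ = ⋀ W`, the exterior algebra of `W`. -/
abbrev SpinDelta (m : ℕ) : Type := ExteriorAlgebra ℂ (SpinW m)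

/-- `V = W ⊕ W* ⊕ ℂe`. -/
abbrev SpinV (m : ℕ) : Type := SpinW m × Module.Dual ℂ (SpinW m) × ℂ

/-- The standard basis vector `w_i` of `W`. -/
def wB (m : ℕ) (i : Fin m) : SpinW m := Pi.single i 1

/-- The dual basis vector `w_i*` of `W*`. -/
def wD (m : ℕ) (i : Fin m) : Module.Dual ℂ (SpinW m) := LinearMap.proj i

/-- `w_i` regarded as an element of `V`. -/
def wV (m : ℕ) (i : Fin m) : SpinV m := (wB m i, 0, 0)

/-- `w_i*` regarded as an element of `V`. -/
def wsV (m : ℕ) (i : Fin m) : SpinV m := (0, wD m i, 0)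

/-- `e` regarded as an element of `V`. -/
def eV (m : ℕ) : SpinV m := (0, 0, 1)

/-- `X_v : Δ → Δ`, left exterior multiplication by `v ∈ W`. -/
def Xop (m : ℕ) (v : SpinW m) : SpinDelta m →ₗ[ℂ] SpinDelta m :=
  LinearMap.mulLeft ℂ (ExteriorAlgebra.ι ℂ v)

/-- `D_λ : Δ → Δ`, the interior product with `λ ∈ W*`;
it satisfies `D_λ(v₁ ∧ ⋯ ∧ v_k) = Σ (−1)^{i−1} λ(v_i) v₁ ∧ ⋯ ∧ v̂_i ∧ ⋯ ∧ v_k`. -/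
def Dop (m : ℕ) (lam : Module.Dual ℂ (SpinW m)) : SpinDelta m →ₗ[ℂ] SpinDelta m :=
  CliffordAlgebra.contractLeft (Q := (0 : QuadraticForm ℂ (SpinW m))) lam

/-- The grading operator `D : Δ → Δ` acting by `(−1)^k` on `⋀^k W`. -/
def Gop (m : ℕ) : SpinDelta m →ₗ[ℂ] SpinDelta m :=
  (CliffordAlgebra.involute (Q := (0 : QuadraticForm ℂ (SpinW m)))).toLinearMap

/-- Projection `V → W`. -/
def pW (m : ℕ) : SpinV m →ₗ[ℂ] SpinW m := LinearMap.fst ℂ _ _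

/-- Projection `V → W*`. -/
def pD (m : ℕ) : SpinV m →ₗ[ℂ] Module.Dual ℂ (SpinW m) :=
  (LinearMap.fst ℂ _ ℂ).comp (LinearMap.snd ℂ (SpinW m) _)

/-- Projection `V → ℂ` (the `e`-coordinate). -/
def pC (m : ℕ) : SpinV m →ₗ[ℂ] ℂ :=
  (LinearMap.snd ℂ _ ℂ).comp (LinearMap.snd ℂ (SpinW m) _)

/-- Inclusion `W → V`. -/
def iW (m : ℕ) : SpinW m →ₗ[ℂ] SpinV m :=
  LinearMap.inl ℂ (SpinW m) (Module.Dual ℂ (SpinW m) × ℂ)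

/-- Inclusion `W* → V`. -/
def iD (m : ℕ) : Module.Dual ℂ (SpinW m) →ₗ[ℂ] SpinV m :=
  (LinearMap.inr ℂ (SpinW m) _).comp (LinearMap.inl ℂ (Module.Dual ℂ (SpinW m)) ℂ)

/-- Inclusion `ℂe → V`. -/
def iC (m : ℕ) : ℂ →ₗ[ℂ] SpinV m :=
  (LinearMap.inr ℂ (SpinW m) _).comp (LinearMap.inr ℂ (Module.Dual ℂ (SpinW m)) ℂ)

/-- The symmetric bilinear form `ω` on `V`:
`ω((u,η,c),(u',η',c')) = η'(u) + η(u') + c·c'`; so `ω(w_i, w_j*) = δ_{ij}`,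
`ω(e,e) = 1`, `W` and `W*` are isotropic and `e` is orthogonal to both. -/
def omegaB (m : ℕ) : SpinV m →ₗ[ℂ] SpinV m →ₗ[ℂ] ℂ :=
  ((((LinearMap.llcomp ℂ (SpinV m) (SpinW m) ℂ).flip (pW m)).comp (pD m)).flip
  + ((LinearMap.llcomp ℂ (SpinV m) (SpinW m) ℂ).flip (pW m)).comp (pD m))
  + (pC m).smulRight (pC m)

/-- The spin projection `π : V ⊗ Δ → Δ` as a bilinear map:
`(v,λ,c) ⊗ a ↦ √2 X_v(a) + √2 D_λ(a) + c D(a)`. -/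
def piB (m : ℕ) : SpinV m →ₗ[ℂ] SpinDelta m →ₗ[ℂ] SpinDelta m :=
  (Real.sqrt 2 : ℂ) • (((LinearMap.mul ℂ (SpinDelta m)).comp ((ExteriorAlgebra.ι ℂ).comp (pW m)))
      + (CliffordAlgebra.contractLeft (Q := (0 : QuadraticForm ℂ (SpinW m)))).comp (pD m))
  + (pC m).smulRight (Gop m)

/-- The spin projection `π : V ⊗ Δ → Δ`. -/
def piMap (m : ℕ) : SpinV m ⊗[ℂ] SpinDelta m →ₗ[ℂ] SpinDelta m :=
  TensorProduct.lift (piB m)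

/-- The spin injection `ι : Δ → V ⊗ Δ`,
`a ↦ √2 Σᵢ (wᵢ ⊗ D_{wᵢ*}(a) + wᵢ* ⊗ X_{wᵢ}(a)) + e ⊗ D(a)`. -/
def iotaMap (m : ℕ) : SpinDelta m →ₗ[ℂ] SpinV m ⊗[ℂ] SpinDelta m :=
  (Real.sqrt 2 : ℂ) • (∑ i : Fin m,
      ((TensorProduct.mk ℂ (SpinV m) (SpinDelta m) (wV m i)).comp (Dop m (wD m i))
        + (TensorProduct.mk ℂ (SpinV m) (SpinDelta m) (wsV m i)).comp (Xop m (wB m i))))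
  + (TensorProduct.mk ℂ (SpinV m) (SpinDelta m) (eV m)).comp (Gop m)

/-- The invariant element `θ = Σᵢ (wᵢ ⊗ wᵢ* + wᵢ* ⊗ wᵢ) + e ⊗ e ∈ V ⊗ V`. -/
def theta (m : ℕ) : SpinV m ⊗[ℂ] SpinV m :=
  (∑ i : Fin m, (wV m i ⊗ₜ wsV m i + wsV m i ⊗ₜ wV m i)) + eV m ⊗ₜ eV m

/-- Evaluation of a dual vector at `w ∈ W`. -/
def evalW (m : ℕ) (w : SpinW m) : Module.Dual ℂ (SpinW m) →ₗ[ℂ] ℂ :=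
  Module.Dual.eval ℂ (SpinW m) w

/-- `A_{v,w} : V → V`, with `A(u) = 0`, `A(η) = η(w)v − η(v)w`, `A(e) = 0`. -/
def Amap (m : ℕ) (v w : SpinW m) : SpinV m →ₗ[ℂ] SpinV m :=
  (iW m) ∘ₗ (((evalW m w).smulRight v - (evalW m v).smulRight w) ∘ₗ pD m)

/-- `B_λ : V → V`, with `B(u) = λ(u)e`, `B(η) = 0`, `B(e) = −λ`. -/
def Bmap (m : ℕ) (lam : Module.Dual ℂ (SpinW m)) : SpinV m →ₗ[ℂ] SpinV m :=
  (iC m) ∘ₗ (lam ∘ₗ pW m) - (iD m) ∘ₗ ((pC m).smulRight lam)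

/-- `C_v : V → V`, with `C(u) = 0`, `C(η) = −η(v)e`, `C(e) = v`. -/
def Cmap (m : ℕ) (v : SpinW m) : SpinV m →ₗ[ℂ] SpinV m :=
  (iW m) ∘ₗ ((pC m).smulRight v) - (iC m) ∘ₗ ((evalW m v) ∘ₗ pD m)

/-- `H_{v,λ} : V → V`, with `H(u) = λ(u)v`, `H(η) = −η(v)λ`, `H(e) = 0`. -/
def Hmap (m : ℕ) (v : SpinW m) (lam : Module.Dual ℂ (SpinW m)) : SpinV m →ₗ[ℂ] SpinV m :=
  (iW m) ∘ₗ ((lam ∘ₗ pW m).smulRight v) - (iD m) ∘ₗ (((evalW m v) ∘ₗ pD m).smulRight lam)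

/-- `E_{λ,μ} : V → V`, with `E(u) = μ(u)λ − λ(u)μ`, `E(η) = 0`, `E(e) = 0`. -/
def Emap (m : ℕ) (lam mu : Module.Dual ℂ (SpinW m)) : SpinV m →ₗ[ℂ] SpinV m :=
  (iD m) ∘ₗ ((mu ∘ₗ pW m).smulRight lam - (lam ∘ₗ pW m).smulRight mu)

/-- The contraction `ω ⊗ id_Δ : V ⊗ (V ⊗ Δ) → Δ`, `x ⊗ y ⊗ b ↦ ω(x,y) b`. -/
def contrMap (m : ℕ) : SpinV m ⊗[ℂ] (SpinV m ⊗[ℂ] SpinDelta m) →ₗ[ℂ] SpinDelta m :=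
  (TensorProduct.lid ℂ (SpinDelta m)).toLinearMap
    ∘ₗ (TensorProduct.map (TensorProduct.lift (omegaB m)) LinearMap.id)
    ∘ₗ (TensorProduct.assoc ℂ (SpinV m) (SpinV m) (SpinDelta m)).symm.toLinearMap

/-- The swap `τ ⊗ id_Δ : V ⊗ (V ⊗ Δ) → V ⊗ (V ⊗ Δ)`, `x ⊗ y ⊗ b ↦ y ⊗ x ⊗ b`. -/
def swapMap (m : ℕ) :
    SpinV m ⊗[ℂ] (SpinV m ⊗[ℂ] SpinDelta m) →ₗ[ℂ] SpinV m ⊗[ℂ] (SpinV m ⊗[ℂ] SpinDelta m) :=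
  (TensorProduct.assoc ℂ (SpinV m) (SpinV m) (SpinDelta m)).toLinearMap
    ∘ₗ (LinearMap.rTensor (SpinDelta m) (TensorProduct.comm ℂ (SpinV m) (SpinV m)).toLinearMap)
    ∘ₗ (TensorProduct.assoc ℂ (SpinV m) (SpinV m) (SpinDelta m)).symm.toLinearMap
namespace SpinAux

variable {m : ℕ}

/-- `e i = ι (w i)`. -/
def eE (m : ℕ) (i : Fin m) : SpinDelta m := ExteriorAlgebra.ι ℂ (wB m i)

/-- wedge monomial indexed by a list. -/
def PL (m : ℕ) (L : List (Fin m)) : SpinDelta m := (L.map (eE m)).prod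

@[simp] lemma PL_nil : PL m [] = 1 := rfl

@[simp] lemma PL_cons (i : Fin m) (L : List (Fin m)) :
    PL m (i :: L) = eE m i * PL m L := by simp [PL]

lemma PL_append (L L' : List (Fin m)) : PL m (L ++ L') = PL m L * PL m L' := by
  simp [PL]

lemma e_sq (i : Fin m) : eE m i * eE m i = 0 := ExteriorAlgebra.ι_sq_zero _

lemma e_swap (i j : Fin m) : eE m i * eE m j = -(eE m j * eE m i) :=
  eq_neg_of_add_eq_zero_left (ExteriorAlgebra.ι_add_mul_swap _ _)

lemma e_mul_PL_of_mem {i : Fin m} {L : List (Fin m)} (h : i ∈ L) :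
    eE m i * PL m L = 0 := by
  induction L with
  | nil => simp at h
  | cons j L ih =>
    rcases List.mem_cons.mp h with h | h
    · subst h; rw [PL_cons, ← mul_assoc, e_sq, zero_mul]
    · rw [PL_cons, ← mul_assoc, e_swap, neg_mul, mul_assoc, ih h, mul_zero, neg_zero]

lemma PL_mul_e (L : List (Fin m)) (i : Fin m) :
    PL m L * eE m i = ((-1 : ℂ)) ^ L.length • (eE m i * PL m L) := by
  induction L with
  | nil => simp
  | cons j L ih =>
    rw [PL_cons, mul_assoc, ih, mul_smul_comm, ← mul_assoc, e_swap, neg_mul, mul_assoc,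
      smul_neg, List.length_cons, pow_succ, mul_neg_one, neg_smul]

lemma PL_mul_e_of_mem {i : Fin m} {L : List (Fin m)} (h : i ∈ L) :
    PL m L * eE m i = 0 := by
  rw [PL_mul_e, e_mul_PL_of_mem h, smul_zero]

lemma PL_of_not_nodup {L : List (Fin m)} (h : ¬ L.Nodup) : PL m L = 0 := by
  induction L with
  | nil => simp at h
  | cons j L ih =>
    rw [List.nodup_cons] at h
    push_neg at h
    by_cases hj : j ∈ L
    · rw [PL_cons, e_mul_PL_of_mem hj]
    · rw [PL_cons, ih (h hj), mul_zero]

/-! ### contraction lemmas -/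

lemma D_mul (lam : Module.Dual ℂ (SpinW m)) (v : SpinW m) (b : SpinDelta m) :
    Dop m lam (ExteriorAlgebra.ι ℂ v * b) = lam v • b - ExteriorAlgebra.ι ℂ v * Dop m lam b :=
  CliffordAlgebra.contractLeft_ι_mul lam v b

lemma D_one (lam : Module.Dual ℂ (SpinW m)) : Dop m lam (1 : SpinDelta m) = 0 :=
  CliffordAlgebra.contractLeft_one _ _

lemma wD_wB (i j : Fin m) : wD m i (wB m j) = if i = j then 1 else 0 := by
  simp [wD, wB, Pi.single_apply]

lemma D_PL_of_not_mem {i : Fin m} {L : List (Fin m)} (h : i ∉ L) :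
    Dop m (wD m i) (PL m L) = 0 := by
  induction L with
  | nil => exact D_one _
  | cons j L ih =>
    rw [PL_cons, eE, D_mul, wD_wB, if_neg (by rintro rfl; exact h List.mem_cons_self),
      ih (fun hi => h (List.mem_cons_of_mem _ hi)), zero_smul, mul_zero, sub_zero]

lemma D_PL_erase {i : Fin m} {L : List (Fin m)} (h : i ∈ L) (hnd : L.Nodup) :
    ∃ c : ℂ, c ≠ 0 ∧ Dop m (wD m i) (PL m L) = c • PL m (L.erase i) := by
  induction L with
  | nil => simp at h
  | cons j L ih =>
    rw [List.nodup_cons] at hnd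
    by_cases hij : j = i
    · subst hij
      refine ⟨1, one_ne_zero, ?_⟩
      rw [PL_cons, eE, D_mul, wD_wB, if_pos rfl, D_PL_of_not_mem hnd.1, mul_zero, sub_zero,
        one_smul, List.erase_cons_head, one_smul]
    · have hiL : i ∈ L := by
        rcases List.mem_cons.mp h with h' | h'
        · exact absurd h'.symm hij
        · exact h'
      obtain ⟨c, hc, hD⟩ := ih hiL hnd.2
      refine ⟨-c, neg_ne_zero.mpr hc, ?_⟩
      rw [PL_cons, eE, D_mul, wD_wB, if_neg (fun h' => hij h'.symm), zero_smul, zero_sub, hD,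
        List.erase_cons_tail (by simp [hij]), PL_cons]
      rw [mul_smul_comm, neg_smul]
      rfl

/-! ### iterated contraction -/

def FCl (m : ℕ) (L : List (Fin m)) : SpinDelta m →ₗ[ℂ] SpinDelta m :=
  L.foldl (fun f i => (Dop m (wD m i)).comp f) LinearMap.id

lemma foldl_comp_apply (L : List (Fin m)) (f : SpinDelta m →ₗ[ℂ] SpinDelta m) (a : SpinDelta m) :
    (L.foldl (fun f i => (Dop m (wD m i)).comp f) f) a = FCl m L (f a) := by
  induction L generalizing f a with
  | nil => rfl
  | cons i L ih =>
    show (L.foldl _ ((Dop m (wD m i)).comp f)) a = (L.foldl _ ((Dop m (wD m i)).comp LinearMap.id)) (f a)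
    rw [ih, ih]
    rfl

@[simp] lemma FCl_nil (a : SpinDelta m) : FCl m [] a = a := rfl

lemma FCl_cons (i : Fin m) (L : List (Fin m)) (a : SpinDelta m) :
    FCl m (i :: L) a = FCl m L (Dop m (wD m i) a) := by
  show (L.foldl _ ((Dop m (wD m i)).comp LinearMap.id)) a = _
  rw [foldl_comp_apply]
  rfl

lemma FCl_PL_self {L : List (Fin m)} (hnd : L.Nodup) : FCl m L (PL m L) = 1 := by
  induction L with
  | nil => simp
  | cons i L ih =>
    rw [List.nodup_cons] at hnd
    rw [FCl_cons, PL_cons, eE, D_mul, wD_wB, if_pos rfl, one_smul,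
      D_PL_of_not_mem hnd.1, mul_zero, sub_zero, ih hnd.2]

/-! ### spanning -/

lemma ι_eq_sum (v : SpinW m) : ExteriorAlgebra.ι ℂ v = ∑ i : Fin m, v i • eE m i := by
  have hv : v = ∑ i : Fin m, v i • wB m i := by
    ext j
    simp [wB, Pi.single_apply]
  conv_lhs => rw [hv]
  simp [eE]

lemma span_PL_top : Submodule.span ℂ (Set.range (PL m)) = ⊤ := by
  rw [eq_top_iff]
  rintro x -
  induction x using CliffordAlgebra.induction with
  | algebraMap r =>
    rw [Algebra.algebraMap_eq_smul_one]
    exact Submodule.smul_mem _ _ (Submodule.subset_span ⟨[], rfl⟩)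
  | ι v =>
    rw [show ExteriorAlgebra.ι ℂ v = (ExteriorAlgebra.ι ℂ : SpinW m →ₗ[ℂ] SpinDelta m) v from rfl,
      ι_eq_sum]
    refine Submodule.sum_mem _ fun i _ => Submodule.smul_mem _ _ (Submodule.subset_span ⟨[i], ?_⟩)
    simp [PL]
  | mul x y hx hy =>
    induction hx using Submodule.span_induction with
    | mem x hx =>
      obtain ⟨L, rfl⟩ := hx
      induction hy using Submodule.span_induction with
      | mem y hy =>
        obtain ⟨L', rfl⟩ := hy
        exact Submodule.subset_span ⟨L ++ L', PL_append L L'⟩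
      | zero => rw [mul_zero]; exact Submodule.zero_mem _
      | add y z _ _ hy hz => rw [mul_add]; exact Submodule.add_mem _ hy hz
      | smul c y _ hy => rw [mul_smul_comm]; exact Submodule.smul_mem _ _ hy
    | zero => rw [zero_mul]; exact Submodule.zero_mem _
    | add x z _ _ hx hz => rw [add_mul]; exact Submodule.add_mem _ hx hz
    | smul c x _ hx => rw [smul_mul_assoc]; exact Submodule.smul_mem _ _ hx
  | add x y hx hy => exact Submodule.add_mem _ hx hy

lemma ext_PL {N : Type*} [AddCommGroup N] [Module ℂ N]
    {f g : SpinDelta m →ₗ[ℂ] N} (h : ∀ L, f (PL m L) = g (PL m L)) : f = g := by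
  refine LinearMap.ext_on (span_PL_top (m := m)) ?_
  rintro x ⟨L, rfl⟩
  exact h L

/-! ### involute and contraction -/

lemma Gop_one : Gop m (1 : SpinDelta m) = 1 := map_one CliffordAlgebra.involute

lemma Gop_Gop (x : SpinDelta m) : Gop m (Gop m x) = x := CliffordAlgebra.involute_involute x

lemma Gop_mul_ι (v : SpinW m) (x : SpinDelta m) :
    Gop m (ExteriorAlgebra.ι ℂ v * x) = -(ExteriorAlgebra.ι ℂ v * Gop m x) := by
  show CliffordAlgebra.involute _ = _
  rw [map_mul, CliffordAlgebra.involute_ι, neg_mul]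
  rfl

lemma D_Gop (lam : Module.Dual ℂ (SpinW m)) (x : SpinDelta m) :
    Dop m lam (Gop m x) = - Gop m (Dop m lam x) := by
  have : (Dop m lam) ∘ₗ (Gop m) = -((Gop m) ∘ₗ (Dop m lam)) := by
    refine ext_PL fun L => ?_
    induction L with
    | nil =>
      simp only [LinearMap.comp_apply, LinearMap.neg_apply, PL_nil, Gop_one, D_one, map_zero,
        neg_zero]
    | cons i L ih =>
      simp only [LinearMap.comp_apply, LinearMap.neg_apply] at ih ⊢
      rw [PL_cons, eE, Gop_mul_ι, map_neg, D_mul, D_mul, map_sub, Gop_mul_ι, ih]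
      rw [mul_neg, LinearMap.map_smul (Gop m)]
  simpa using LinearMap.congr_fun this x

/-! ### algebraMapInv -/

lemma algebraMapInv_one : ExteriorAlgebra.algebraMapInv (1 : SpinDelta m) = 1 :=
  map_one _

lemma algebraMapInv_eE_mul (i : Fin m) (x : SpinDelta m) :
    ExteriorAlgebra.algebraMapInv (eE m i * x) = 0 := by
  rw [map_mul, eE, show ExteriorAlgebra.algebraMapInv (ExteriorAlgebra.ι ℂ (wB m i)) = 0
    by simp [ExteriorAlgebra.algebraMapInv], zero_mul]

lemma algebraMapInv_PL_cons (i : Fin m) (L : List (Fin m)) :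
    ExteriorAlgebra.algebraMapInv (PL m (i :: L)) = 0 := by
  rw [PL_cons, algebraMapInv_eE_mul]

/-! ### the key contraction computation -/

lemma FCl_PL (L M : List (Fin m)) (hM : M.Nodup) :
    FCl m L (PL m M) = 0 ∨
      (L.toFinset ⊆ M.toFinset ∧ ∃ (c : ℂ) (M' : List (Fin m)), M'.Nodup ∧
        M'.toFinset = M.toFinset \ L.toFinset ∧ FCl m L (PL m M) = c • PL m M') := by
  induction L generalizing M with
  | nil =>
    refine Or.inr ⟨by simp, 1, M, hM, by simp, by simp⟩
  | cons i L ih =>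
    by_cases hi : i ∈ M
    · obtain ⟨c₁, _, hD⟩ := D_PL_erase hi hM
      have hMe : (M.erase i).Nodup := hM.erase i
      rcases ih (M.erase i) hMe with h0 | ⟨hsub, c₂, M', hM', hMt, hF⟩
      · left
        rw [FCl_cons, hD, map_smul, h0, smul_zero]
      · right
        have herase : (M.erase i).toFinset = M.toFinset.erase i := by
          ext j
          simp [List.mem_toFinset, hM.mem_erase_iff, Finset.mem_erase]
        constructor
        · intro j hj
          rcases (by simpa using hj : j = i ∨ j ∈ L) with rfl | hjL
          · exact List.mem_toFinset.mpr hi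
          · have := hsub (List.mem_toFinset.mpr hjL)
            rw [herase] at this
            exact Finset.mem_of_mem_erase this
        · refine ⟨c₁ * c₂, M', hM', ?_, ?_⟩
          · rw [hMt, herase]
            ext j
            simp only [Finset.mem_sdiff, Finset.mem_erase, List.toFinset_cons, Finset.mem_insert]
            tauto
          · rw [FCl_cons, hD, map_smul, hF, smul_smul]
    · left
      rw [FCl_cons, D_PL_of_not_mem hi, map_zero]

/-! ### canonical monomials -/

def Pf (m : ℕ) (S : Finset (Fin m)) : SpinDelta m := PL m (S.sort (· ≤ ·))

def cS (m : ℕ) (S : Finset (Fin m)) : SpinDelta m →ₗ[ℂ] ℂ :=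
  (ExteriorAlgebra.algebraMapInv.toLinearMap : SpinDelta m →ₗ[ℂ] ℂ) ∘ₗ FCl m (S.sort (· ≤ ·))

lemma cS_Pf (S T : Finset (Fin m)) : cS m S (Pf m T) = if S = T then 1 else 0 := by
  by_cases hST : S = T
  · subst hST
    rw [if_pos rfl]
    show ExteriorAlgebra.algebraMapInv (FCl m _ (PL m _)) = 1
    rw [FCl_PL_self (Finset.sort_nodup _ _), algebraMapInv_one]
  · rw [if_neg hST]
    show ExteriorAlgebra.algebraMapInv (FCl m (S.sort (· ≤ ·)) (PL m (T.sort (· ≤ ·)))) = 0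
    rcases FCl_PL (S.sort (· ≤ ·)) (T.sort (· ≤ ·)) (Finset.sort_nodup _ _) with h0 |
      ⟨hsub, c, M', hM', hMt, hF⟩
    · rw [h0, map_zero]
    · rw [Finset.sort_toFinset, Finset.sort_toFinset] at hsub hMt
      have hTS : ¬ (T \ S = ∅) := by
        intro hempty
        exact hST (Finset.Subset.antisymm hsub
          (fun t ht => by_contra fun hts => (Finset.eq_empty_iff_forall_notMem.mp hempty t)
            (Finset.mem_sdiff.mpr ⟨ht, hts⟩)))
      have hM'ne : M' ≠ [] := by
        intro h
        subst h
        exact hTS (by rw [← hMt]; simp)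
      obtain ⟨j, R, rfl⟩ := List.exists_cons_of_ne_nil hM'ne
      rw [hF, map_smul, algebraMapInv_PL_cons, smul_zero]

/-! ### sorting signs -/

lemma e_mul_Pf {i : Fin m} {S : Finset (Fin m)} (h : i ∉ S) :
    ∃ c : ℂ, eE m i * Pf m S = c • Pf m (insert i S) := by
  set M := (insert i S).sort (· ≤ ·) with hM
  have hiM : i ∈ M := Finset.mem_sort (α := Fin m) (· ≤ ·) |>.mpr (Finset.mem_insert_self i S)
  obtain ⟨c₁, hc₁, hD⟩ := D_PL_erase hiM (Finset.sort_nodup _ _)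
  have hMe : M.erase i = S.sort (· ≤ ·) := by
    refine List.Perm.eq_of_pairwise'
      ((Finset.pairwise_sort _ _).erase i) (Finset.pairwise_sort _ _)
      (List.perm_of_nodup_nodup_toFinset_eq ((Finset.sort_nodup _ _).erase i)
        (Finset.sort_nodup _ _) ?_)
    · have : (M.erase i).toFinset = ((insert i S).sort (· ≤ ·)).toFinset.erase i := by
        ext j
        simp [List.mem_toFinset, (Finset.sort_nodup (α := Fin m) _ (· ≤ ·)).mem_erase_iff,
          Finset.mem_erase]
        rw [hM, (Finset.sort_nodup (insert i S) (· ≤ ·)).mem_erase_iff, Finset.mem_sort,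
          Finset.mem_insert]
        tauto
      rw [this, Finset.sort_toFinset, Finset.sort_toFinset, Finset.erase_insert h]
  have key : eE m i * Dop m (wD m i) (PL m M) = PL m M := by
    have h2 : Dop m (wD m i) (eE m i * PL m M) = wD m i (wB m i) • PL m M
        - eE m i * Dop m (wD m i) (PL m M) := D_mul _ _ _
    rw [e_mul_PL_of_mem hiM, map_zero, wD_wB, if_pos rfl, one_smul] at h2
    exact (sub_eq_zero.mp h2.symm).symm
  refine ⟨c₁⁻¹, ?_⟩
  have : eE m i * (c₁ • PL m (M.erase i)) = PL m M := by rw [← hD]; exact key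
  rw [hMe] at this
  rw [mul_smul_comm] at this
  show eE m i * PL m (S.sort (· ≤ ·)) = c₁⁻¹ • PL m M
  rw [← this, smul_smul, inv_mul_cancel₀ hc₁, one_smul]

lemma PL_eq_smul_Pf {L : List (Fin m)} (h : L.Nodup) :
    ∃ c : ℂ, PL m L = c • Pf m L.toFinset := by
  induction L with
  | nil =>
    refine ⟨1, ?_⟩
    rw [PL_nil, one_smul, List.toFinset_nil, Pf, Finset.sort_empty, PL_nil]
  | cons i L ih =>
    rw [List.nodup_cons] at h
    obtain ⟨c, hc⟩ := ih h.2
    have hi : i ∉ L.toFinset := fun hmem => h.1 (List.mem_toFinset.mp hmem)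
    obtain ⟨c₂, hc₂⟩ := e_mul_Pf hi
    refine ⟨c * c₂, ?_⟩
    rw [PL_cons, hc, mul_smul_comm, hc₂, smul_smul, List.toFinset_cons]

/-! ### the reproducing map -/

def Psi (m : ℕ) : SpinDelta m →ₗ[ℂ] SpinDelta m :=
  ∑ S : Finset (Fin m), (cS m S).smulRight (Pf m S)

lemma Psi_Pf (T : Finset (Fin m)) : Psi m (Pf m T) = Pf m T := by
  rw [Psi, LinearMap.sum_apply]
  simp only [LinearMap.smulRight_apply, cS_Pf, ite_smul, one_smul, zero_smul]
  simp

lemma Psi_eq_id : Psi m = (LinearMap.id : SpinDelta m →ₗ[ℂ] SpinDelta m) := by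
  refine ext_PL fun L => ?_
  rw [LinearMap.id_apply]
  by_cases h : L.Nodup
  · obtain ⟨c, hc⟩ := PL_eq_smul_Pf h
    rw [hc, map_smul, Psi_Pf]
  · rw [PL_of_not_nodup h, map_zero]

lemma exists_cS_ne_zero {a : SpinDelta m} (ha : a ≠ 0) :
    ∃ S : Finset (Fin m), cS m S a ≠ 0 := by
  by_contra h
  push_neg at h
  apply ha
  have hP : Psi m a = a := LinearMap.congr_fun (Psi_eq_id (m := m)) a
  rw [← hP, Psi, LinearMap.sum_apply]
  simp only [LinearMap.smulRight_apply]
  exact Finset.sum_eq_zero fun S _ => by rw [h S, zero_smul]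

/-! ### omega -/

lemma omega_mul (b : SpinDelta m) :
    PL m (List.finRange m) * b = ExteriorAlgebra.algebraMapInv b • PL m (List.finRange m) := by
  have : LinearMap.mulLeft ℂ (PL m (List.finRange m)) =
      (ExteriorAlgebra.algebraMapInv.toLinearMap : SpinDelta m →ₗ[ℂ] ℂ).smulRight
        (PL m (List.finRange m)) := by
    refine ext_PL fun L => ?_
    cases L with
    | nil =>
      simp only [LinearMap.mulLeft_apply, LinearMap.smulRight_apply, PL_nil, mul_one,
        AlgHom.toLinearMap_apply, map_one, one_smul]
    | cons i L =>
      simp only [LinearMap.mulLeft_apply, LinearMap.smulRight_apply, AlgHom.toLinearMap_apply,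
        PL_cons, algebraMapInv_eE_mul, zero_smul, ← mul_assoc]
      rw [PL_mul_e_of_mem (List.mem_finRange i), zero_mul]
  exact LinearMap.congr_fun this b

end SpinAux

/-- The spin representation of `𝔰𝔬(2m+1)` on `Δ = ⋀ W` is irreducible: if `U ⊆ Δ` is a
ℂ-linear subspace invariant under `X_v ∘ X_w`, `X_v ∘ D`, `X_v ∘ D_λ`, `D ∘ D_λ` and
`D_λ ∘ D_μ` for all `v, w ∈ W` and `λ, μ ∈ W*`, then `U = 0` or `U = Δ`. -/
theorem spin_rep_irreducible (m : ℕ) (hm : 1 ≤ m) (U : Submodule ℂ (SpinDelta m))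
    (h1 : ∀ (v w : SpinW m), ∀ a ∈ U, Xop m v (Xop m w a) ∈ U)
    (h2 : ∀ (v : SpinW m), ∀ a ∈ U, Xop m v (Gop m a) ∈ U)
    (h3 : ∀ (v : SpinW m) (lam : Module.Dual ℂ (SpinW m)), ∀ a ∈ U, Xop m v (Dop m lam a) ∈ U)
    (h4 : ∀ (lam : Module.Dual ℂ (SpinW m)), ∀ a ∈ U, Gop m (Dop m lam a) ∈ U)
    (h5 : ∀ (lam mu : Module.Dual ℂ (SpinW m)), ∀ a ∈ U, Dop m lam (Dop m mu a) ∈ U) :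
    U = ⊥ ∨ U = ⊤ := by
  by_cases hU : U = ⊥
  · exact Or.inl hU
  right
  obtain ⟨a, haU, ha0⟩ := (Submodule.ne_bot_iff U).mp hU
  classical
  have PP_X : ∀ (v : SpinW m) (x : SpinDelta m), (x ∈ U ∨ Gop m x ∈ U) →
      (ExteriorAlgebra.ι ℂ v * x ∈ U ∨ Gop m (ExteriorAlgebra.ι ℂ v * x) ∈ U) := by
    intro v x hx
    rcases hx with hx | hx
    · right
      rw [SpinAux.Gop_mul_ι]
      exact U.neg_mem (h2 v x hx)
    · left
      have := h2 v (Gop m x) hx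
      rwa [show Xop m v (Gop m (Gop m x)) = ExteriorAlgebra.ι ℂ v * Gop m (Gop m x) from rfl,
        SpinAux.Gop_Gop] at this
  have PP_D : ∀ (lam : Module.Dual ℂ (SpinW m)) (x : SpinDelta m), (x ∈ U ∨ Gop m x ∈ U) →
      (Dop m lam x ∈ U ∨ Gop m (Dop m lam x) ∈ U) := by
    intro lam x hx
    rcases hx with hx | hx
    · exact Or.inr (h4 lam x hx)
    · left
      have := h4 lam (Gop m x) hx
      rw [SpinAux.D_Gop, map_neg, SpinAux.Gop_Gop] at this
      simpa using U.neg_mem this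
  have PP_FCl : ∀ (L : List (Fin m)) (x : SpinDelta m), (x ∈ U ∨ Gop m x ∈ U) →
      (SpinAux.FCl m L x ∈ U ∨ Gop m (SpinAux.FCl m L x) ∈ U) := by
    intro L
    induction L with
    | nil => intro x hx; simpa using hx
    | cons i L ih =>
      intro x hx
      rw [SpinAux.FCl_cons]
      exact ih _ (PP_D _ _ hx)
  have PP_PL_mul : ∀ (L : List (Fin m)) (x : SpinDelta m), (x ∈ U ∨ Gop m x ∈ U) →
      (SpinAux.PL m L * x ∈ U ∨ Gop m (SpinAux.PL m L * x) ∈ U) := by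
    intro L
    induction L with
    | nil => intro x hx; simpa using hx
    | cons i L ih =>
      intro x hx
      rw [SpinAux.PL_cons, mul_assoc]
      exact PP_X (wB m i) _ (ih x hx)
  obtain ⟨S, hS⟩ := SpinAux.exists_cS_ne_zero (m := m) ha0
  set s : ℂ := ExteriorAlgebra.algebraMapInv (R := ℂ) (SpinAux.FCl m (S.sort (· ≤ ·)) a) with hs
  have hsne : s ≠ 0 := hS
  have hPPb : SpinAux.FCl m (S.sort (· ≤ ·)) a ∈ U ∨
      Gop m (SpinAux.FCl m (S.sort (· ≤ ·)) a) ∈ U := PP_FCl _ _ (Or.inl haU)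
  have hω : SpinAux.PL m (List.finRange m) * SpinAux.FCl m (S.sort (· ≤ ·)) a
      = s • SpinAux.PL m (List.finRange m) := SpinAux.omega_mul _
  have hPP2 : s • SpinAux.PL m (List.finRange m) ∈ U ∨
      Gop m (s • SpinAux.PL m (List.finRange m)) ∈ U := hω ▸ PP_PL_mul _ _ hPPb
  have hPP3 := PP_FCl (List.finRange m) _ hPP2
  have hval : SpinAux.FCl m (List.finRange m) (s • SpinAux.PL m (List.finRange m))
      = s • (1 : SpinDelta m) := by
    rw [map_smul, SpinAux.FCl_PL_self (List.nodup_finRange m)]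
  rw [hval] at hPP3
  have hs1 : s • (1 : SpinDelta m) ∈ U := by
    rcases hPP3 with h | h
    · exact h
    · rwa [map_smul, SpinAux.Gop_one] at h
  have h1U : (1 : SpinDelta m) ∈ U := by
    have := U.smul_mem s⁻¹ hs1
    rwa [smul_smul, inv_mul_cancel₀ hsne, one_smul] at this
  have key : ∀ x : SpinDelta m, ∀ y, y ∈ U → Gop m y ∈ U →
      x * y ∈ U ∧ Gop m (x * y) ∈ U := by
    intro x
    induction x using CliffordAlgebra.induction with
    | algebraMap r =>
      intro y hy hGy
      rw [Algebra.algebraMap_eq_smul_one, smul_mul_assoc, one_mul]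
      exact ⟨U.smul_mem r hy, by rw [map_smul]; exact U.smul_mem r hGy⟩
    | ι v =>
      intro y hy hGy
      constructor
      · have := h2 v (Gop m y) hGy
        rwa [show Xop m v (Gop m (Gop m y)) = ExteriorAlgebra.ι ℂ v * Gop m (Gop m y) from rfl,
          SpinAux.Gop_Gop] at this
      · rw [SpinAux.Gop_mul_ι]
        exact U.neg_mem (h2 v y hy)
    | mul x₁ x₂ hx₁ hx₂ =>
      intro y hy hGy
      obtain ⟨hy2, hGy2⟩ := hx₂ y hy hGy
      have := hx₁ (x₂ * y) hy2 hGy2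
      rwa [← mul_assoc] at this
    | add x₁ x₂ hx₁ hx₂ =>
      intro y hy hGy
      obtain ⟨ha1, ha2⟩ := hx₁ y hy hGy
      obtain ⟨hb1, hb2⟩ := hx₂ y hy hGy
      exact ⟨by rw [add_mul]; exact U.add_mem ha1 hb1,
        by rw [add_mul, map_add]; exact U.add_mem ha2 hb2⟩
  refine Submodule.eq_top_iff'.mpr fun x => ?_
  have := (key x 1 h1U (by rw [SpinAux.Gop_one]; exact h1U)).1
  rwa [mul_one] at this
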